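/- Let N ≥ 2 and let F be the type A prepotential with Λ = e^{3/2} on the open cone C = {x ∈ ℝ^N : x_1 > x_2 > ⋯ > x_N > 0}. Then the Hessian map x ↦ (∂²F/∂x_i∂x_j(x))_{1≤i,j≤N} is injective on C; that is, if x, y ∈ C have ∂²F/∂x_i∂x_j(x) = ∂²F/∂x_i∂x_j(y) for all i, j, then x = y. -/

import Mathlib

open Real Finset

/-- Partial derivative in the `i`-th coordinate direction. -/
noncomputable def pd {N : ℕ} (i : Fin N) (f : (Fin N → ℝ) → ℝ) : (Fin N → ℝ) → ℝ :=
  fun x => fderiv ℝ f x (Pi.single i 1)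

/-- Hessian entry `T_ij = ∂²f/∂x_i∂x_j`. -/
noncomputable def hess {N : ℕ} (f : (Fin N → ℝ) → ℝ) (i j : Fin N) : (Fin N → ℝ) → ℝ :=
  pd i (pd j f)

/-- The open cone `x₁ > x₂ > ⋯ > x_N > 0`. -/
def cone (N : ℕ) : Set (Fin N → ℝ) := {x | StrictAnti x ∧ ∀ i, 0 < x i}

/-- The type A prepotential with cut-off `Λ`. -/
noncomputable def FA (N : ℕ) (Λ : ℝ) (x : Fin N → ℝ) : ℝ :=
  (1/2) * ∑ i : Fin N, ∑ j : Fin N,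
      (if i < j then (x i - x j)^2 * Real.log ((x i - x j)/Λ) else 0)
  + (1/2) * ∑ i : Fin N, (x i)^2 * Real.log (x i / Λ)

noncomputable def prj (N : ℕ) (i : Fin N) : (Fin N → ℝ) →L[ℝ] ℝ := ContinuousLinearMap.proj i

noncomputable def e (N : ℕ) (k : Fin N) : Fin N → ℝ := Pi.single k 1

noncomputable def q (t : ℝ) : ℝ := t * Real.log t - t

lemma hasDerivAt_q {t : ℝ} (ht : 0 < t) : HasDerivAt q (Real.log t) t := by
  have h1 : HasDerivAt (fun s : ℝ => s * Real.log s) (1 * Real.log t + t * t⁻¹) t :=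
    (hasDerivAt_id t).mul (Real.hasDerivAt_log ht.ne')
  have h2 := h1.sub (hasDerivAt_id t)
  have h3 : 1 * Real.log t + t * t⁻¹ - 1 = Real.log t := by field_simp; ring
  rw [h3] at h2
  exact h2

lemma hasDerivAt_g {t : ℝ} (ht : 0 < t) :
    HasDerivAt (fun s : ℝ => (1/2) * (s^2 * Real.log (s / Real.exp (3/2)))) (q t) t := by
  have hlog : HasDerivAt (fun s : ℝ => Real.log (s / Real.exp (3/2))) (t⁻¹) t := by
    have h0 : HasDerivAt (fun s : ℝ => s / Real.exp (3/2)) ((Real.exp (3/2))⁻¹) t := by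
      simpa using (hasDerivAt_id t).div_const (Real.exp ((3:ℝ)/2))
    have hne : t / Real.exp (3/2) ≠ 0 := by positivity
    have := (Real.hasDerivAt_log hne).comp t h0
    refine this.congr_deriv ?_
    field_simp
  have hpow : HasDerivAt (fun s : ℝ => s^2) (2 * t) t := by
    simpa using hasDerivAt_pow 2 t
  have hmul := hpow.mul hlog
  have hfin := hmul.const_mul (1/2 : ℝ)
  refine hfin.congr_deriv ?_
  have hΛ : Real.log (t / Real.exp (3/2)) = Real.log t - 3/2 := by
    rw [Real.log_div ht.ne' (Real.exp_ne_zero _), Real.log_exp]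
  rw [hΛ]
  unfold q
  field_simp
  ring

noncomputable def DFF (N : ℕ) (x : Fin N → ℝ) : (Fin N → ℝ) →L[ℝ] ℝ :=
  (∑ i : Fin N, ∑ j : Fin N,
    if i < j then q (x i - x j) • (prj N i - prj N j) else 0)
  + ∑ i : Fin N, q (x i) • prj N i

noncomputable def P (N : ℕ) (k : Fin N) (x : Fin N → ℝ) : ℝ :=
  (∑ i : Fin N, ∑ j : Fin N,
    if i < j then q (x i - x j) * (e N k i - e N k j) else 0)
  + q (x k)

lemma FA_eq (N : ℕ) (Λ : ℝ) :
    FA N Λ = fun x => (∑ i : Fin N, ∑ j : Fin N,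
        if i < j then (1/2) * ((x i - x j)^2 * Real.log ((x i - x j)/Λ)) else 0)
      + ∑ i : Fin N, (1/2) * ((x i)^2 * Real.log (x i / Λ)) := by
  funext x
  simp only [FA, Finset.mul_sum, mul_ite, mul_zero]

lemma isOpen_cone (N : ℕ) : IsOpen (cone N) := by
  have h1 : cone N = (⋂ p : Fin N × Fin N, {x : Fin N → ℝ | p.1 < p.2 → x p.2 < x p.1})
      ∩ ⋂ i : Fin N, {x : Fin N → ℝ | 0 < x i} := by
    ext z
    simp only [cone, Set.mem_setOf_eq, Set.mem_inter_iff, Set.mem_iInter]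
    constructor
    · rintro ⟨h1, h2⟩
      exact ⟨fun p hp => h1 hp, h2⟩
    · rintro ⟨h1, h2⟩
      exact ⟨fun a b hab => h1 (a, b) hab, h2⟩
  rw [h1]
  apply IsOpen.inter
  · apply isOpen_iInter_of_finite
    intro p
    by_cases hp : p.1 < p.2
    · have : {x : Fin N → ℝ | p.1 < p.2 → x p.2 < x p.1} = {x | x p.2 < x p.1} := by
        ext z; simp [hp]
      rw [this]
      exact isOpen_lt (continuous_apply p.2) (continuous_apply p.1)
    · have : {x : Fin N → ℝ | p.1 < p.2 → x p.2 < x p.1} = Set.univ := by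
        ext z; simp [hp]
      rw [this]
      exact isOpen_univ
  · exact isOpen_iInter_of_finite fun i => isOpen_lt continuous_const (continuous_apply i)

lemma hasFDerivAt_FA {N : ℕ} {x : Fin N → ℝ} (hx : x ∈ cone N) :
    HasFDerivAt (FA N (Real.exp (3/2))) (DFF N x) x := by
  rw [FA_eq]
  unfold DFF
  apply HasFDerivAt.add
  · apply HasFDerivAt.fun_sum; intro i _
    apply HasFDerivAt.fun_sum; intro j _
    by_cases hij : i < j
    · simp only [if_pos hij]
      have hu : HasFDerivAt (fun z : Fin N → ℝ => z i - z j) (prj N i - prj N j) x :=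
        ((prj N i).hasFDerivAt).sub ((prj N j).hasFDerivAt)
      have ht : 0 < x i - x j := sub_pos.2 (hx.1 hij)
      have := (hasDerivAt_g ht).comp_hasFDerivAt x hu
      exact this
    · simp only [if_neg hij]
      exact hasFDerivAt_const 0 x
  · apply HasFDerivAt.fun_sum; intro i _
    have := (hasDerivAt_g (hx.2 i)).comp_hasFDerivAt x (prj N i).hasFDerivAt
    exact this

lemma DFF_apply (N : ℕ) (k : Fin N) (x : Fin N → ℝ) :
    DFF N x (Pi.single k 1) = P N k x := by
  unfold DFF P
  simp only [ContinuousLinearMap.add_apply, ContinuousLinearMap.sum_apply,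
    apply_ite (fun L : (Fin N → ℝ) →L[ℝ] ℝ => L (Pi.single k 1)),
    ContinuousLinearMap.smul_apply, ContinuousLinearMap.sub_apply,
    ContinuousLinearMap.zero_apply, prj, ContinuousLinearMap.proj_apply, smul_eq_mul, e]
  congr 1
  simp only [Pi.single_apply, mul_ite, mul_one, mul_zero]
  rw [Finset.sum_ite_eq']
  simp

noncomputable def DP (N : ℕ) (k : Fin N) (x : Fin N → ℝ) : (Fin N → ℝ) →L[ℝ] ℝ :=
  (∑ i : Fin N, ∑ j : Fin N,
    if i < j then (e N k i - e N k j) •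
      (Real.log (x i - x j) • (prj N i - prj N j)) else 0)
  + Real.log (x k) • prj N k

lemma hasFDerivAt_P {N : ℕ} (k : Fin N) {x : Fin N → ℝ} (hx : x ∈ cone N) :
    HasFDerivAt (P N k) (DP N k x) x := by
  unfold P DP
  apply HasFDerivAt.add
  · apply HasFDerivAt.fun_sum; intro i _
    apply HasFDerivAt.fun_sum; intro j _
    by_cases hij : i < j
    · simp only [if_pos hij]
      have hu : HasFDerivAt (fun z : Fin N → ℝ => z i - z j) (prj N i - prj N j) x :=
        ((prj N i).hasFDerivAt).sub ((prj N j).hasFDerivAt)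
      have ht : 0 < x i - x j := sub_pos.2 (hx.1 hij)
      have h1 : HasFDerivAt (fun z : Fin N → ℝ => q (z i - z j))
          (Real.log (x i - x j) • (prj N i - prj N j)) x :=
        by have := (hasDerivAt_q ht).comp_hasFDerivAt x hu; exact this
      exact h1.mul_const _
    · simp only [if_neg hij]
      exact hasFDerivAt_const 0 x
  · exact (hasDerivAt_q (hx.2 k)).comp_hasFDerivAt x (prj N k).hasFDerivAt

lemma hess_eq {N : ℕ} (i k : Fin N) {x : Fin N → ℝ} (hx : x ∈ cone N) :
    hess (FA N (Real.exp (3/2))) i k x = DP N k x (Pi.single i 1) := by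
  unfold hess pd
  have hev : (fun z => fderiv ℝ (FA N (Real.exp (3/2))) z (Pi.single k 1)) =ᶠ[nhds x] P N k := by
    filter_upwards [(isOpen_cone N).mem_nhds hx] with z hz
    rw [(hasFDerivAt_FA hz).fderiv, DFF_apply]
  rw [hev.fderiv_eq, (hasFDerivAt_P k hx).fderiv]

lemma DP_apply (N : ℕ) (k i' : Fin N) (x : Fin N → ℝ) :
    DP N k x (Pi.single i' 1) =
    (∑ a : Fin N, ∑ b : Fin N,
      if a < b then (e N k a - e N k b) *
        (Real.log (x a - x b) * (e N i' a - e N i' b)) else 0)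
    + Real.log (x k) * e N i' k := by
  simp only [DP, ContinuousLinearMap.add_apply, ContinuousLinearMap.sum_apply,
    apply_ite (fun L : (Fin N → ℝ) →L[ℝ] ℝ => L (Pi.single i' 1)),
    ContinuousLinearMap.smul_apply, ContinuousLinearMap.sub_apply,
    ContinuousLinearMap.zero_apply, prj, ContinuousLinearMap.proj_apply, smul_eq_mul, e]

lemma hess_offdiag {N : ℕ} {a b : Fin N} (hab : a < b) {x : Fin N → ℝ} (hx : x ∈ cone N) :
    hess (FA N (Real.exp (3/2))) a b x = - Real.log (x a - x b) := by
  rw [hess_eq a b hx, DP_apply]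
  have hne : b ≠ a := hab.ne'
  have hlast : Real.log (x b) * e N a b = 0 := by
    simp [e, Pi.single_apply, hne]
  rw [hlast, add_zero, ← Finset.sum_product']
  rw [Finset.sum_eq_single (a, b)]
  · simp [e, Pi.single_apply, hab, hab.ne, hab.ne']
  · rintro ⟨c, d⟩ _ hp
    by_cases hcd : c < d
    · rw [if_pos hcd]
      by_cases hdb : d = b
      · subst hdb
        by_cases hca : c = a
        · exact absurd (by rw [hca]) hp
        · simp [e, Pi.single_apply, hca, hab.ne']
      · by_cases hcb : c = b
        · subst hcb
          by_cases hda : d = a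
          · subst hda
            exact absurd (hcd.trans hab) (lt_irrefl _)
          · simp [e, Pi.single_apply, hda, hab.ne']
        · simp [e, Pi.single_apply, hcb, hdb]
    · rw [if_neg hcd]
  · intro hmem
    simp at hmem

lemma hess_diag {N : ℕ} (k : Fin N) {x : Fin N → ℝ} (hx : x ∈ cone N) :
    hess (FA N (Real.exp (3/2))) k k x =
      (∑ l : Fin N, if k < l then Real.log (x k - x l)
        else if l < k then Real.log (x l - x k) else 0) + Real.log (x k) := by
  rw [hess_eq k k hx, DP_apply]
  congr 1
  · set F : Fin N → Fin N → ℝ := fun i j =>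
      if i < j then (e N k i - e N k j) *
        (Real.log (x i - x j) * (e N k i - e N k j)) else 0 with hFdef
    have hF0 : ∀ i j, i ≠ k → j ≠ k → F i j = 0 := by
      intro i j hi hj
      simp [hFdef, e, Pi.single_apply, hi, hj]
    have hrow : ∀ i, i ≠ k → ∑ j : Fin N, F i j = F i k := by
      intro i hi
      exact Finset.sum_eq_single k (fun j _ hj => hF0 i j hi hj) (by simp)
    have hFkk : F k k = 0 := by simp [hFdef]
    calc (∑ i : Fin N, ∑ j : Fin N, F i j)
        = (∑ j : Fin N, F k j) + ∑ i ∈ Finset.univ.erase k, F i k := by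
          rw [← Finset.add_sum_erase _ _ (Finset.mem_univ k)]
          congr 1
          exact Finset.sum_congr rfl fun i hi => hrow i (Finset.ne_of_mem_erase hi)
      _ = (∑ j : Fin N, F k j) + ∑ i : Fin N, F i k := by
          congr 1
          rw [← Finset.add_sum_erase _ (fun i => F i k) (Finset.mem_univ k), hFkk, zero_add]
      _ = ∑ l : Fin N, (F k l + F l k) := by rw [Finset.sum_add_distrib]
      _ = ∑ l : Fin N, (if k < l then Real.log (x k - x l)
            else if l < k then Real.log (x l - x k) else 0) := by
          apply Finset.sum_congr rfl
          intro l _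
          rcases lt_trichotomy k l with hl | hl | hl
          · simp [hFdef, hl, asymm hl, hl.ne', e, Pi.single_apply]
          · subst hl; simp [hFkk]
          · simp [hFdef, hl, asymm hl, hl.ne, e, Pi.single_apply]
  · simp [e]

/-- the Hessian map of the type A prepotential with `Λ = e^{3/2}`
is injective on the cone. -/
theorem typeA_hessian_injective (N : ℕ) (hN : 2 ≤ N) (x y : Fin N → ℝ)
    (hx : x ∈ cone N) (hy : y ∈ cone N)
    (h : ∀ i j : Fin N, hess (FA N (Real.exp (3/2))) i j x
        = hess (FA N (Real.exp (3/2))) i j y) :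
    x = y := by
  funext a
  have hlog : Real.log (x a) = Real.log (y a) := by
    have hd := h a a
    rw [hess_diag a hx, hess_diag a hy] at hd
    have hs : (∑ l : Fin N, if a < l then Real.log (x a - x l)
          else if l < a then Real.log (x l - x a) else 0)
        = ∑ l : Fin N, if a < l then Real.log (y a - y l)
          else if l < a then Real.log (y l - y a) else 0 := by
      apply Finset.sum_congr rfl
      intro l _
      rcases lt_trichotomy a l with hl | hl | hl
      · rw [if_pos hl, if_pos hl]
        have hh := h a l
        rw [hess_offdiag hl hx, hess_offdiag hl hy] at hh
        linarith
      · subst hl; simp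
      · rw [if_neg (asymm hl), if_neg (asymm hl), if_pos hl, if_pos hl]
        have hh := h l a
        rw [hess_offdiag hl hx, hess_offdiag hl hy] at hh
        linarith
    linarith
  have := congrArg Real.exp hlog
  rwa [Real.exp_log (hx.2 a), Real.exp_log (hy.2 a)] at this
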